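/- (Theorem 1.2(ii)(a), non-global existence.) Let h, l : [0,∞) → [0,∞) be continuous, and let f, g : [0,∞) → [0,∞) be locally Lipschitz continuous with f(0) = g(0) = 0. Let u₀ ∈ C_b(ℝ^N) be nonnegative with u₀ ≢ 0. Suppose f ∈ Φ and there exists τ > 0 such that ∫_{‖S(τ)u₀‖_∞}^∞ dσ/f(σ) ≤ ∫_0^τ h(σ) dσ. Then there is no global solution of problem (P) with initial data u₀. -/

import Mathlib

open MeasureTheory Real Set Metric Filter

noncomputable section

/-- `ℝ^N`. -/
abbrev EucN (N : ℕ) := EuclideanSpace ℝ (Fin N)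

/-- `C_b(ℝ^N)`, the bounded continuous functions with the sup norm. -/
abbrev CbN (N : ℕ) := BoundedContinuousFunction (EucN N) ℝ

open Topology

namespace NGAux
variable {N : ℕ}

lemma integrable_of_integral_eq_one {ρ : EucN N → ℝ} (h : ∫ y, ρ y = 1) :
    Integrable ρ := by
  by_contra hc
  rw [integral_undef hc] at h
  exact zero_ne_one h

lemma kernel_mul_integrable {ρ φ : EucN N → ℝ} (hρ : Integrable ρ)
    (hφm : AEStronglyMeasurable φ volume) {C : ℝ} (hφb : ∀ y, |φ y| ≤ C) :
    Integrable (fun y => ρ y * φ y) := by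
  have := hρ.bdd_mul hφm (c := C) (Eventually.of_forall fun y => by simpa using hφb y)
  simpa [mul_comm] using this

lemma kernel_mul_integral_le {ρ φ : EucN N → ℝ} (hρ : Integrable ρ) (hρnn : ∀ y, 0 ≤ ρ y)
    (hρ1 : ∫ y, ρ y = 1) (hprod : Integrable fun y => ρ y * φ y) {C : ℝ}
    (hφb : ∀ y, |φ y| ≤ C) :
    |∫ y, ρ y * φ y| ≤ C := by
  calc |∫ y, ρ y * φ y| ≤ ∫ y, |ρ y| * |φ y| := by simpa [abs_mul] using norm_integral_le_integral_norm (μ := volume) (fun y => ρ y * φ y)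
    _ ≤ ∫ y, ρ y * C := by
        refine integral_mono (by simpa [abs_mul] using hprod.abs) (hρ.mul_const C) fun y => ?_
        rw [abs_of_nonneg (hρnn y)]
        exact mul_le_mul_of_nonneg_left (hφb y) (hρnn y)
    _ = C := by rw [integral_mul_const, hρ1, one_mul]

end NGAux

namespace KA
variable {N : ℕ}

lemma measurable_slice_left (Γ : EucN N → EucN N → ℝ → ℝ)
    (hΓmeas : Measurable fun p : EucN N × EucN N × ℝ => Γ p.1 p.2.1 p.2.2)
    (x : EucN N) (t : ℝ) : Measurable fun y => Γ x y t :=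
  hΓmeas.comp (measurable_const.prodMk (measurable_id.prodMk measurable_const))

lemma kernelA (Γ : EucN N → EucN N → ℝ → ℝ)
    (hΓmeas : Measurable fun p : EucN N × EucN N × ℝ => Γ p.1 p.2.1 p.2.2)
    (hK1y : ∀ (x : EucN N) (t : ℝ), 0 < t → ∫ y, Γ x y t = 1)
    (hK2 : ∀ (x y : EucN N) (s t : ℝ), 0 < s → s < t →
      Γ x y t = ∫ ξ, Γ x ξ (t - s) * Γ ξ y s)
    (hΓpos : ∀ (x y : EucN N) (t : ℝ), 0 < t → 0 < Γ x y t)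
    (x : EucN N) {a b : ℝ} (ha : 0 < a) (hb : 0 < b)
    (φ : EucN N → ℝ) (hφm : Measurable φ) {C : ℝ} (hφb : ∀ y, |φ y| ≤ C) :
    ∫ ξ, Γ x ξ a * ∫ y, Γ ξ y b * φ y = ∫ y, Γ x y (a + b) * φ y := by
  have hC0 : 0 ≤ C := le_trans (abs_nonneg _) (hφb (0 : EucN N))
  have hma : Measurable fun ξ => Γ x ξ a := measurable_slice_left Γ hΓmeas x a
  have hinta : Integrable (fun ξ => Γ x ξ a) :=
    NGAux.integrable_of_integral_eq_one (hK1y x a ha)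
  have hintb : ∀ ξ, Integrable (fun y => Γ ξ y b) := fun ξ =>
    NGAux.integrable_of_integral_eq_one (hK1y ξ b hb)
  -- the product function
  set F : EucN N × EucN N → ℝ := fun p => Γ x p.1 a * Γ p.1 p.2 b * φ p.2 with hF
  have hFmeas : Measurable F := by
    apply Measurable.mul
    · apply Measurable.mul
      · exact (measurable_slice_left Γ hΓmeas x a).comp measurable_fst
      · exact hΓmeas.comp (measurable_fst.prodMk (measurable_snd.prodMk measurable_const))
    · exact hφm.comp measurable_snd
  have hslice : ∀ ξ, Integrable (fun y => F (ξ, y)) := by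
    intro ξ
    have : Integrable (fun y => Γ ξ y b * φ y) :=
      NGAux.kernel_mul_integrable (hintb ξ) (hφm.aestronglyMeasurable) hφb
    simpa [hF, mul_assoc] using this.const_mul (Γ x ξ a)
  have hFint : Integrable F (volume.prod volume) := by
    refine (integrable_prod_iff hFmeas.aestronglyMeasurable).2 ⟨?_, ?_⟩
    · exact Eventually.of_forall hslice
    · refine Integrable.mono' (hinta.mul_const C)
        (hFmeas.norm.stronglyMeasurable.integral_prod_right'.aestronglyMeasurable)
        (Eventually.of_forall fun ξ => ?_)
      have h1 : ∀ y, ‖F (ξ, y)‖ = Γ x ξ a * (Γ ξ y b * |φ y|) := by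
        intro y
        have := (hΓpos x ξ a ha).le
        have := (hΓpos ξ y b hb).le
        simp [hF, abs_mul, abs_of_nonneg, *, mul_assoc]
      rw [Real.norm_eq_abs, abs_of_nonneg (integral_nonneg fun y => by
        rw [h1 y]
        exact mul_nonneg (hΓpos x ξ a ha).le (mul_nonneg (hΓpos ξ y b hb).le (abs_nonneg _)))]
      calc (∫ y, ‖F (ξ, y)‖) = Γ x ξ a * ∫ y, Γ ξ y b * |φ y| := by
            simp only [h1]; exact integral_const_mul _ _
        _ ≤ Γ x ξ a * C := by
            refine mul_le_mul_of_nonneg_left ?_ (hΓpos x ξ a ha).le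
            have habs : Integrable (fun y => Γ ξ y b * |φ y|) :=
              NGAux.kernel_mul_integrable (hintb ξ) hφm.abs.aestronglyMeasurable
                (fun y => by simpa using hφb y)
            calc (∫ y, Γ ξ y b * |φ y|) ≤ ∫ y, Γ ξ y b * C := by
                  refine integral_mono habs ((hintb ξ).mul_const C) fun y => ?_
                  exact mul_le_mul_of_nonneg_left (by simpa using hφb y) (hΓpos ξ y b hb).le
              _ = C := by rw [integral_mul_const, hK1y ξ b hb, one_mul]
  -- now compute
  have hkey : ∀ y, Γ x y (a + b) = ∫ ξ, Γ x ξ a * Γ ξ y b := by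
    intro y
    have := hK2 x y b (a + b) hb (by linarith)
    simpa [add_sub_cancel_right] using this
  calc ∫ ξ, Γ x ξ a * ∫ y, Γ ξ y b * φ y
      = ∫ ξ, ∫ y, F (ξ, y) := by
        refine integral_congr_ae (Eventually.of_forall fun ξ => ?_)
        simp only [hF, mul_assoc]
        exact (integral_const_mul _ _).symm
    _ = ∫ y, ∫ ξ, F (ξ, y) := integral_integral_swap hFint
    _ = ∫ y, Γ x y (a + b) * φ y := by
        refine integral_congr_ae (Eventually.of_forall fun y => ?_)
        show (∫ ξ, F (ξ, y)) = Γ x y (a + b) * φ y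
        rw [hkey y, ← integral_mul_const]

end KA

namespace KB
variable {N : ℕ}

lemma kernelB_integrable (Γ : EucN N → EucN N → ℝ → ℝ)
    (hΓmeas : Measurable fun p : EucN N × EucN N × ℝ => Γ p.1 p.2.1 p.2.2)
    (x : EucN N) {A t : ℝ} (ht : 0 < t)
    (hintA : Integrable fun ξ => Γ x ξ A)
    (P : ℝ → EucN N → ℝ)
    (hPm : StronglyMeasurable fun p : EucN N × ℝ => P p.2 p.1)
    {B : ℝ} (hB : ∀ σ ∈ Ioo (0:ℝ) t, ∀ ξ, |P σ ξ| ≤ B) :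
    Integrable (fun p : EucN N × ℝ => Γ x p.1 A * P p.2 p.1)
      (volume.prod (volume.restrict (Ioo (0:ℝ) t))) := by
  have hg : Integrable (fun p : EucN N × ℝ => Γ x p.1 A * B)
      (volume.prod (volume.restrict (Ioo (0:ℝ) t))) := by
    have hc : Integrable (fun _ : ℝ => B) (volume.restrict (Ioo (0:ℝ) t)) :=
      integrableOn_const measure_Ioo_lt_top.ne
    exact hintA.mul_prod hc
  refine Integrable.mono' (by simpa [abs_mul] using hg.abs) ?_ ?_
  · exact (((KA.measurable_slice_left Γ hΓmeas x A).comp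
      measurable_fst).stronglyMeasurable.mul hPm).aestronglyMeasurable
  · rw [← Measure.restrict_univ (μ := (volume : Measure (EucN N))), Measure.prod_restrict]
    refine (ae_restrict_iff' (MeasurableSet.univ.prod measurableSet_Ioo)).2
      (Eventually.of_forall fun p hp => ?_)
    have hσ : p.2 ∈ Ioo (0:ℝ) t := hp.2
    rw [Real.norm_eq_abs, abs_mul]
    exact mul_le_mul le_rfl ((hB p.2 hσ p.1).trans (le_abs_self _)) (abs_nonneg _) (abs_nonneg _)

end KB

namespace OSG

lemma G_split (f : ℝ → ℝ)
    (hfO : ∀ z, 0 < z → IntegrableOn (fun σ => 1 / f σ) (Ioi z))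
    {z₁ z₂ : ℝ} (h1 : 0 < z₁) (h12 : z₁ ≤ z₂) :
    ∫ σ in Ioi z₁, 1 / f σ
      = (∫ σ in Ioc z₁ z₂, 1 / f σ) + ∫ σ in Ioi z₂, 1 / f σ := by
  rw [← setIntegral_union (Ioc_disjoint_Ioi le_rfl) measurableSet_Ioi
    ((hfO z₁ h1).mono_set Ioc_subset_Ioi_self) (hfO z₂ (lt_of_lt_of_le h1 h12)),
    Ioc_union_Ioi_eq_Ioi h12]

lemma G_antitone (f : ℝ → ℝ) (hfnn : ∀ s, 0 ≤ s → 0 ≤ f s)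
    (hfO : ∀ z, 0 < z → IntegrableOn (fun σ => 1 / f σ) (Ioi z))
    {z₁ z₂ : ℝ} (h1 : 0 < z₁) (h12 : z₁ ≤ z₂) :
    ∫ σ in Ioi z₂, 1 / f σ ≤ ∫ σ in Ioi z₁, 1 / f σ := by
  rw [G_split f hfO h1 h12]
  have : 0 ≤ ∫ σ in Ioc z₁ z₂, 1 / f σ :=
    setIntegral_nonneg measurableSet_Ioc fun σ hσ =>
      div_nonneg zero_le_one (hfnn σ (le_of_lt (lt_of_lt_of_le h1 hσ.1.le)))
  linarith

lemma osgood (f : ℝ → ℝ) (hfc : ContinuousOn f (Ici 0))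
    (hfmono : MonotoneOn f (Ici 0)) (hfpos : ∀ s, 0 < s → 0 < f s)
    (hfnn : ∀ s, 0 ≤ s → 0 ≤ f s)
    (hfO : ∀ z, 0 < z → IntegrableOn (fun σ => 1 / f σ) (Ioi z))
    (h : ℝ → ℝ) (hhc : ContinuousOn h (Ici 0)) (hhnn : ∀ t, 0 ≤ t → 0 ≤ h t)
    {τ a M : ℝ} (hτ : 0 < τ) (ha : 0 < a)
    (w : ℝ → ℝ) (hwc : ContinuousOn w (Icc 0 τ)) (hwnn : ∀ σ ∈ Icc (0:ℝ) τ, 0 ≤ w σ)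
    (key : ∀ t ∈ Icc (0:ℝ) τ, a + ∫ σ in (0:ℝ)..t, h σ * f (w σ) ≤ w t)
    (hM : a ≤ M) (hwM : w τ ≤ M) :
    (∫ t in (0:ℝ)..τ, h t) + ∫ σ in Ioi M, 1 / f σ ≤ ∫ σ in Ioi a, 1 / f σ := by
  have hIcc : Icc (0:ℝ) 0 ⊆ Icc (0:ℝ) τ := Icc_subset_Icc le_rfl hτ.le
  -- the integrand of W
  set q : ℝ → ℝ := fun σ => h σ * f (w σ) with hq
  have hqc : ContinuousOn q (Icc 0 τ) := by
    refine ContinuousOn.mul (hhc.mono fun σ hσ => hσ.1) ?_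
    exact hfc.comp hwc fun σ hσ => hwnn σ hσ
  have hqnn : ∀ σ ∈ Icc (0:ℝ) τ, 0 ≤ q σ := fun σ hσ =>
    mul_nonneg (hhnn σ hσ.1) (hfnn _ (hwnn σ hσ))
  have hqint : ∀ t₁ t₂, t₁ ∈ Icc (0:ℝ) τ → t₂ ∈ Icc (0:ℝ) τ →
      IntervalIntegrable q volume t₁ t₂ := by
    intro t₁ t₂ h₁ h₂
    refine ContinuousOn.intervalIntegrable (hqc.mono ?_)
    exact Set.uIcc_subset_Icc ⟨h₁.1, h₁.2⟩ ⟨h₂.1, h₂.2⟩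
  set W : ℝ → ℝ := fun t => a + ∫ σ in (0:ℝ)..t, q σ with hW
  have hW0 : W 0 = a := by simp [hW]
  have hWmono : ∀ t₁ t₂, t₁ ∈ Icc (0:ℝ) τ → t₂ ∈ Icc (0:ℝ) τ → t₁ ≤ t₂ → W t₁ ≤ W t₂ := by
    intro t₁ t₂ h₁ h₂ h12
    have : (∫ σ in (0:ℝ)..t₂, q σ) - ∫ σ in (0:ℝ)..t₁, q σ = ∫ σ in t₁..t₂, q σ := by
      rw [intervalIntegral.integral_interval_sub_left (hqint 0 t₂ (left_mem_Icc.2 hτ.le) h₂)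
        (hqint 0 t₁ (left_mem_Icc.2 hτ.le) h₁)]
    have hnn : 0 ≤ ∫ σ in t₁..t₂, q σ :=
      intervalIntegral.integral_nonneg h12 fun σ hσ =>
        hqnn σ ⟨le_trans h₁.1 hσ.1, le_trans hσ.2 h₂.2⟩
    simp only [hW]
    linarith
  have haW : ∀ t ∈ Icc (0:ℝ) τ, a ≤ W t := by
    intro t htm
    have : 0 ≤ ∫ σ in (0:ℝ)..t, q σ :=
      intervalIntegral.integral_nonneg htm.1 fun σ hσ => hqnn σ ⟨hσ.1, le_trans hσ.2 htm.2⟩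
    simp only [hW]; linarith
  have hWw : ∀ t ∈ Icc (0:ℝ) τ, W t ≤ w t := key
  have hWpos : ∀ t ∈ Icc (0:ℝ) τ, 0 < W t := fun t htm => lt_of_lt_of_le ha (haW t htm)
  have hWτa : a ≤ W τ := haW τ (right_mem_Icc.2 hτ.le)
  have hWc : ContinuousOn W (Icc 0 τ) := by
    have hint : IntegrableOn q (Icc 0 τ) := hqc.integrableOn_compact isCompact_Icc
    have := intervalIntegral.continuousOn_primitive (f := q) (μ := volume) (a := 0) (b := τ) hint
    refine continuousOn_const.add (this.congr fun t htm => ?_)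
    rw [intervalIntegral.integral_of_le htm.1]
  -- H, primitive of 1/f from a
  set Hf : ℝ → ℝ := fun z => ∫ σ in a..z, 1 / f σ with hHf
  have hfOint : IntegrableOn (fun σ => 1 / f σ) (Ioi (a/2)) := hfO _ (half_pos ha)
  have hHconG : ∀ z, a ≤ z → (∫ σ in Ioi a, 1 / f σ) = Hf z + ∫ σ in Ioi z, 1 / f σ := by
    intro z hz
    rw [G_split f hfO ha hz, hHf]
    simp only
    rw [intervalIntegral.integral_of_le hz]
  have hIccIoi : Icc a (W τ) ⊆ Ioi (a/2) := fun z hz =>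
    mem_Ioi.2 (lt_of_lt_of_le (half_lt_self ha) hz.1)
  have hHfc : ContinuousOn Hf (Icc a (W τ)) := by
    have hint : IntegrableOn (fun σ => 1 / f σ) (Icc a (W τ)) := hfOint.mono_set hIccIoi
    have hcp := intervalIntegral.continuousOn_primitive (f := fun σ => 1 / f σ)
      (a := a) (b := W τ) (μ := volume) hint
    exact hcp.congr fun z hz => by
      simp only [hHf]
      rw [intervalIntegral.integral_of_le hz.1]
  set Ψ : ℝ → ℝ := fun t => (∫ s in (0:ℝ)..t, h s) - Hf (W t) with hΨ
  have hmapsW : MapsTo W (Icc 0 τ) (Icc a (W τ)) := fun t htm =>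
    ⟨haW t htm, hWmono t τ htm (right_mem_Icc.2 hτ.le) htm.2⟩
  have hhint : ∀ t₁ t₂, t₁ ∈ Icc (0:ℝ) τ → t₂ ∈ Icc (0:ℝ) τ →
      IntervalIntegrable h volume t₁ t₂ := by
    intro t₁ t₂ h₁ h₂
    refine ContinuousOn.intervalIntegrable (hhc.mono ?_)
    exact le_trans (Set.uIcc_subset_Icc ⟨h₁.1, h₁.2⟩ ⟨h₂.1, h₂.2⟩) (Icc_subset_Ici_self)
  have hΨc : ContinuousOn Ψ (Icc 0 τ) := by
    refine ContinuousOn.sub ?_ (hHfc.comp hWc hmapsW)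
    have hint : IntegrableOn h (Icc 0 τ) :=
      (hhc.mono Icc_subset_Ici_self).integrableOn_compact isCompact_Icc
    have hcp := intervalIntegral.continuousOn_primitive (f := h) (a := 0) (b := τ)
      (μ := volume) hint
    exact hcp.congr fun t htm => by rw [intervalIntegral.integral_of_le htm.1]
  have hderiv : ∀ t ∈ Ioo (0:ℝ) τ, HasDerivAt Ψ (h t - 1 / f (W t) * q t) t := by
    intro t htm
    have htm' : t ∈ Icc (0:ℝ) τ := ⟨htm.1.le, htm.2.le⟩
    have hWtpos : 0 < W t := hWpos t htm'
    have hWta : a ≤ W t := haW t htm'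
    have hWd : HasDerivAt W (q t) t := by
      have hint : IntervalIntegrable q volume 0 t :=
        hqint 0 t (left_mem_Icc.2 hτ.le) htm'
      have hmeas : StronglyMeasurableAtFilter q (𝓝 t) (volume) :=
        ⟨Icc 0 τ, Icc_mem_nhds htm.1 htm.2, hqc.aestronglyMeasurable measurableSet_Icc⟩
      have hcont : ContinuousAt q t := hqc.continuousAt (Icc_mem_nhds htm.1 htm.2)
      exact (intervalIntegral.integral_hasDerivAt_right hint hmeas hcont).const_add a
    have hHd : HasDerivAt Hf (1 / f (W t)) (W t) := by
      have hintH : IntervalIntegrable (fun σ => 1 / f σ) volume a (W t) := by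
        rw [intervalIntegrable_iff]
        refine hfOint.mono_set ?_
        rw [uIoc_of_le hWta]
        exact le_trans Ioc_subset_Ioi_self (Ioi_subset_Ioi (half_le_self ha.le))
      have hmeasH : StronglyMeasurableAtFilter (fun σ => 1 / f σ) (𝓝 (W t)) volume :=
        ⟨Ioi (a/2), Ioi_mem_nhds (lt_of_lt_of_le (half_lt_self ha) hWta),
          hfOint.aestronglyMeasurable⟩
      have hcontH : ContinuousAt (fun σ => 1 / f σ) (W t) := by
        have hfct : ContinuousAt f (W t) := by
          have : Ici (0:ℝ) ∈ 𝓝 (W t) := Ici_mem_nhds hWtpos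
          exact hfc.continuousAt this
        exact continuousAt_const.div hfct (ne_of_gt (hfpos _ hWtpos))
      exact intervalIntegral.integral_hasDerivAt_right hintH hmeasH hcontH
    have hPd : HasDerivAt (fun s => ∫ σ in (0:ℝ)..s, h σ) (h t) t := by
      have hint : IntervalIntegrable h volume 0 t :=
        hhint 0 t (left_mem_Icc.2 hτ.le) htm'
      have hmeas : StronglyMeasurableAtFilter h (𝓝 t) volume :=
        ⟨Ici 0, Ici_mem_nhds htm.1, hhc.aestronglyMeasurable measurableSet_Ici⟩
      have hcont : ContinuousAt h t := hhc.continuousAt (Ici_mem_nhds htm.1)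
      exact intervalIntegral.integral_hasDerivAt_right hint hmeas hcont
    exact hPd.sub (hHd.comp t hWd)
  have hanti : AntitoneOn Ψ (Icc 0 τ) := by
    refine antitoneOn_of_deriv_nonpos (convex_Icc 0 τ) hΨc ?_ ?_
    · intro t htm
      rw [interior_Icc] at htm
      exact (hderiv t htm).differentiableAt.differentiableWithinAt
    · intro t htm
      rw [interior_Icc] at htm
      have htm' : t ∈ Icc (0:ℝ) τ := ⟨htm.1.le, htm.2.le⟩
      rw [(hderiv t htm).deriv]
      have h1 : f (W t) ≤ f (w t) :=
        hfmono (le_trans ha.le (haW t htm')) (hwnn t htm') (hWw t htm')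
      have h2 : 0 < f (W t) := hfpos _ (hWpos t htm')
      have h3 : 0 ≤ h t := hhnn t htm.1.le
      have h4 : h t * f (W t) ≤ h t * f (w t) := mul_le_mul_of_nonneg_left h1 h3
      rw [sub_nonpos, hq]
      rw [one_div, inv_mul_eq_div, le_div_iff₀ h2]
      simpa using h4
  have hfin1 : Ψ τ ≤ Ψ 0 :=
    hanti (left_mem_Icc.2 hτ.le) (right_mem_Icc.2 hτ.le) hτ.le
  have hΨ0 : Ψ 0 = 0 := by
    simp [hΨ, hW0, hHf]
  have hfin2 : (∫ s in (0:ℝ)..τ, h s) ≤ Hf (W τ) := by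
    have := hfin1
    rw [hΨ0] at this
    simp only [hΨ] at this
    linarith
  have hsplit := hHconG (W τ) hWτa
  have hGM : (∫ σ in Ioi M, 1 / f σ) ≤ ∫ σ in Ioi (W τ), 1 / f σ :=
    G_antitone f hfnn hfO (hWpos τ (right_mem_Icc.2 hτ.le))
      (le_trans (hWw τ (right_mem_Icc.2 hτ.le)) hwM)
  linarith

end OSG

lemma contOn_of_locLip (f : ℝ → ℝ)
    (hfLip : ∀ M > (0 : ℝ), ∃ K : NNReal, LipschitzOnWith K f (Icc 0 M)) :
    ContinuousOn f (Ici 0) := by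
  intro s hs
  have hs0 : (0:ℝ) ≤ s := hs
  obtain ⟨K, hK⟩ := hfLip (s + 1) (by linarith)
  have h1 : ContinuousOn f (Icc 0 (s + 1)) := hK.continuousOn
  have h2 : Icc (0:ℝ) (s + 1) ∈ 𝓝[Ici 0] s := by
    rw [← Ici_inter_Iic]
    exact inter_mem_nhdsWithin _ (Iic_mem_nhds (by linarith))
  exact (h1 s ⟨hs0, by linarith⟩).mono_of_mem_nhdsWithin h2

/-- `u` is a global (mild) solution of problem (P)
`u_t - div(ω(x)∇u) = h(t) f(u) + l(t) g(u)`, `u(0) = u₀`, i.e.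
`u ∈ C([0,∞), C_b(ℝ^N))`, `u ≥ 0`, and
`u(t) = S(t)u₀ + ∫_0^t S(t-σ)[h(σ) f(u(σ)) + l(σ) g(u(σ))] dσ` for all `t ≥ 0`,
written pointwise via the kernel `Γ`. -/
def IsGlobalSolution (N : ℕ) (Γ : EucN N → EucN N → ℝ → ℝ)
    (h l f g : ℝ → ℝ) (u₀ : CbN N) (u : ℝ → CbN N) : Prop :=
  ContinuousOn u (Ici (0 : ℝ)) ∧ u 0 = u₀ ∧
    (∀ t : ℝ, 0 ≤ t → ∀ x, 0 ≤ u t x) ∧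
    ∀ t : ℝ, 0 < t → ∀ x,
      u t x = (∫ y, Γ x y t * u₀ y) +
        ∫ σ in (0 : ℝ)..t, ∫ y, Γ x y (t - σ) *
          (h σ * f (u σ y) + l σ * g (u σ y))

set_option maxHeartbeats 2000000 in
/-- Theorem 1.2(ii)(a): if `f ∈ Φ` and the Osgood-type integral condition
holds at some time `τ > 0`, there is no global solution with data `u₀`. -/
theorem nonglobal_existence_f
    (N : ℕ) (hN : 1 ≤ N) (α : ℝ) (hα0 : 0 ≤ α) (hα1 : α < 1)
    (Γ : EucN N → EucN N → ℝ → ℝ)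
    (hΓmeas : Measurable fun p : EucN N × EucN N × ℝ => Γ p.1 p.2.1 p.2.2)
    (c₀ : ℝ) (hc₀ : 0 < c₀)
    (hK1y : ∀ (x : EucN N) (t : ℝ), 0 < t → ∫ y, Γ x y t = 1)
    (hK1x : ∀ (y : EucN N) (t : ℝ), 0 < t → ∫ x, Γ x y t = 1)
    (hK2 : ∀ (x y : EucN N) (s t : ℝ), 0 < s → s < t →
      Γ x y t = ∫ ξ, Γ x ξ (t - s) * Γ ξ y s)
    (hK5 : ∀ (x y : EucN N) (t : ℝ), 0 < t →
      0 < Γ x y t ∧ Γ x y t ≤ c₀ * t ^ (-(N : ℝ) / (2 - α)))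
    (S : ℝ → CbN N → CbN N)
    (hS0 : ∀ φ, S 0 φ = φ)
    (hSΓ : ∀ (φ : CbN N) (t : ℝ), 0 < t → ∀ x, S t φ x = ∫ y, Γ x y t * φ y)
    (hK4 : ∀ φ : CbN N, ContinuousOn (fun t => S t φ) (Ici (0 : ℝ)))
    (h l : ℝ → ℝ)
    (hhcont : ContinuousOn h (Ici 0)) (hlcont : ContinuousOn l (Ici 0))
    (hhnn : ∀ t, 0 ≤ t → 0 ≤ h t) (hlnn : ∀ t, 0 ≤ t → 0 ≤ l t)
    (f g : ℝ → ℝ)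
    (hfLip : ∀ M > (0 : ℝ), ∃ K : NNReal, LipschitzOnWith K f (Icc 0 M))
    (hgLip : ∀ M > (0 : ℝ), ∃ K : NNReal, LipschitzOnWith K g (Icc 0 M))
    (hfnn : ∀ s, 0 ≤ s → 0 ≤ f s) (hgnn : ∀ s, 0 ≤ s → 0 ≤ g s)
    (hf0 : f 0 = 0) (hg0 : g 0 = 0)
    (u₀ : CbN N) (hu₀nn : ∀ x, 0 ≤ u₀ x) (hu₀ne : u₀ ≠ 0)
    -- `f ∈ Φ`:
    (hfOsgood : ∀ z > (0 : ℝ), IntegrableOn (fun σ => 1 / f σ) (Ioi z))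
    (hfJensen : ∀ v₀ : CbN N, (∀ x, 0 ≤ v₀ x) → ∀ t > (0 : ℝ), ∀ x,
      f (S t v₀ x) ≤ ∫ y, Γ x y t * f (v₀ y))
    (hfmono : MonotoneOn f (Ici 0)) (hfpos : ∀ s > (0 : ℝ), 0 < f s)
    -- the blow-up condition:
    (τ : ℝ) (hτ : 0 < τ)
    (hcond : (∫ σ in Ioi ‖S τ u₀‖, 1 / f σ) ≤ ∫ σ in (0 : ℝ)..τ, h σ) :
    ¬ ∃ u : ℝ → CbN N, IsGlobalSolution N Γ h l f g u₀ u := by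
  rintro ⟨u, hucont, hu0, hunn, hueq⟩
  -- kernel facts
  have hΓpos : ∀ (x y : EucN N) (t : ℝ), 0 < t → 0 < Γ x y t :=
    fun x y t ht => (hK5 x y t ht).1
  have hΓint : ∀ (x : EucN N) (t : ℝ), 0 < t → Integrable (fun y => Γ x y t) :=
    fun x t ht => NGAux.integrable_of_integral_eq_one (hK1y x t ht)
  have hΓm : ∀ (x : EucN N) (t : ℝ), Measurable fun y => Γ x y t :=
    fun x t => KA.measurable_slice_left Γ hΓmeas x t
  have hfc : ContinuousOn f (Ici 0) := contOn_of_locLip f hfLip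
  have hgc : ContinuousOn g (Ici 0) := contOn_of_locLip g hgLip
  -- measurable surrogates
  set v : ℝ → CbN N := fun σ => u (max σ 0) with hvdef
  have hvc : Continuous v :=
    hucont.comp_continuous (continuous_id.max continuous_const) fun σ => le_max_right σ 0
  have hveval : Continuous fun p : ℝ × EucN N => v p.1 p.2 :=
    continuous_eval.comp
      ((hvc.comp continuous_fst).prodMk continuous_snd)
  set f₁ : ℝ → ℝ := fun s => f (max s 0) with hf₁def
  have hf₁c : Continuous f₁ :=
    hfc.comp_continuous (continuous_id.max continuous_const) fun s => le_max_right s 0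
  set g₁ : ℝ → ℝ := fun s => g (max s 0) with hg₁def
  have hg₁c : Continuous g₁ :=
    hgc.comp_continuous (continuous_id.max continuous_const) fun s => le_max_right s 0
  set h₁ : ℝ → ℝ := fun σ => h (max σ 0) with hh₁def
  have hh₁c : Continuous h₁ :=
    hhcont.comp_continuous (continuous_id.max continuous_const) fun s => le_max_right s 0
  set l₁ : ℝ → ℝ := fun σ => l (max σ 0) with hl₁def
  have hl₁c : Continuous l₁ :=
    hlcont.comp_continuous (continuous_id.max continuous_const) fun s => le_max_right s 0
  set Ft : ℝ → EucN N → ℝ := fun σ y => h₁ σ * f₁ (v σ y) + l₁ σ * g₁ (v σ y) with hFtdef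
  have hFtc : Continuous fun p : ℝ × EucN N => Ft p.1 p.2 := by
    apply Continuous.add
    · exact (hh₁c.comp continuous_fst).mul (hf₁c.comp hveval)
    · exact (hl₁c.comp continuous_fst).mul (hg₁c.comp hveval)
  have hFtm : Measurable fun p : ℝ × EucN N => Ft p.1 p.2 := hFtc.measurable
  have hFteq : ∀ σ, 0 ≤ σ → ∀ y, Ft σ y = h σ * f (u σ y) + l σ * g (u σ y) := by
    intro σ hσ y
    simp only [hFtdef, hf₁def, hg₁def, hh₁def, hl₁def, hvdef, max_eq_left hσ,
      max_eq_left (hunn σ hσ y)]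
  -- uniform bounds on [0, τ]
  obtain ⟨B, hBnn, hFtB, hfuB⟩ : ∃ B, 0 ≤ B ∧ (∀ σ ∈ Icc (0:ℝ) τ, ∀ y, |Ft σ y| ≤ B) ∧
      ∀ σ ∈ Icc (0:ℝ) τ, ∀ y, |f (u σ y)| ≤ B := by
    obtain ⟨M₀, hM₀⟩ := isCompact_Icc.exists_bound_of_continuousOn
      (hucont.mono (Icc_subset_Ici_self : Icc (0:ℝ) τ ⊆ Ici 0))
    have hM₀0 : 0 ≤ M₀ := le_trans (norm_nonneg _) (hM₀ 0 (left_mem_Icc.2 hτ.le))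
    have huM : ∀ σ ∈ Icc (0:ℝ) τ, ∀ y, u σ y ∈ Icc (0:ℝ) M₀ := by
      intro σ hσ y
      exact ⟨hunn σ hσ.1 y, le_trans (le_trans (le_abs_self _)
        (by simpa [Real.norm_eq_abs] using (u σ).norm_coe_le_norm y)) (hM₀ σ hσ)⟩
    obtain ⟨Fb, hFb⟩ := isCompact_Icc.exists_bound_of_continuousOn
      (hfc.mono (Icc_subset_Ici_self : Icc (0:ℝ) M₀ ⊆ Ici 0))
    obtain ⟨Gb, hGb⟩ := isCompact_Icc.exists_bound_of_continuousOn
      (hgc.mono (Icc_subset_Ici_self : Icc (0:ℝ) M₀ ⊆ Ici 0))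
    obtain ⟨Hb, hHb⟩ := isCompact_Icc.exists_bound_of_continuousOn
      (hhcont.mono (Icc_subset_Ici_self : Icc (0:ℝ) τ ⊆ Ici 0))
    obtain ⟨Lb, hLb⟩ := isCompact_Icc.exists_bound_of_continuousOn
      (hlcont.mono (Icc_subset_Ici_self : Icc (0:ℝ) τ ⊆ Ici 0))
    have hHb0 : 0 ≤ Hb := le_trans (norm_nonneg _) (hHb 0 (left_mem_Icc.2 hτ.le))
    have hLb0 : 0 ≤ Lb := le_trans (norm_nonneg _) (hLb 0 (left_mem_Icc.2 hτ.le))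
    have hFb0 : 0 ≤ Fb := le_trans (norm_nonneg _) (hFb 0 (left_mem_Icc.2 hM₀0))
    have hGb0 : 0 ≤ Gb := le_trans (norm_nonneg _) (hGb 0 (left_mem_Icc.2 hM₀0))
    refine ⟨max (Hb * Fb + Lb * Gb) Fb, le_trans (by positivity) (le_max_left _ _),
      fun σ hσ y => ?_, fun σ hσ y => le_trans
        (by simpa [Real.norm_eq_abs] using hFb _ (huM σ hσ y)) (le_max_right _ _)⟩
    refine le_trans ?_ (le_max_left _ _)
    rw [hFteq σ hσ.1 y]
    have hb1 : |h σ * f (u σ y)| ≤ Hb * Fb := by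
      rw [abs_mul]
      exact mul_le_mul (by simpa [Real.norm_eq_abs] using hHb σ hσ)
        (by simpa [Real.norm_eq_abs] using hFb _ (huM σ hσ y)) (abs_nonneg _) hHb0
    have hb2 : |l σ * g (u σ y)| ≤ Lb * Gb := by
      rw [abs_mul]
      exact mul_le_mul (by simpa [Real.norm_eq_abs] using hLb σ hσ)
        (by simpa [Real.norm_eq_abs] using hGb _ (huM σ hσ y)) (abs_nonneg _) hLb0
    exact le_trans (abs_add_le _ _) (add_le_add hb1 hb2)
  -- positivity of a
  set a : ℝ := ‖S τ u₀‖ with hadef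
  have hSτx : ∀ x, S τ u₀ x = ∫ y, Γ x y τ * u₀ y := fun x => hSΓ u₀ τ hτ x
  have hu₀b : ∀ y : EucN N, |u₀ y| ≤ ‖u₀‖ := fun y => by
    simpa [Real.norm_eq_abs] using u₀.norm_coe_le_norm y
  have hint_u₀ : ∀ (x : EucN N) (t : ℝ), 0 < t → Integrable fun y => Γ x y t * u₀ y :=
    fun x t ht => NGAux.kernel_mul_integrable (hΓint x t ht)
      u₀.continuous.measurable.aestronglyMeasurable hu₀b
  have hSτnn : ∀ z, 0 ≤ S τ u₀ z := by
    intro z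
    rw [hSτx z]
    exact integral_nonneg fun y => mul_nonneg (hΓpos z y τ hτ).le (hu₀nn y)
  have ha : 0 < a := by
    have hne : ∃ y₀, u₀ y₀ ≠ 0 := by
      by_contra hc
      push_neg at hc
      exact hu₀ne (by ext y; simpa using hc y)
    obtain ⟨y₀, hy₀⟩ := hne
    have hy₀pos : 0 < u₀ y₀ := lt_of_le_of_ne (hu₀nn y₀) (Ne.symm hy₀)
    have hopen : IsOpen {y : EucN N | 0 < u₀ y} := isOpen_lt continuous_const u₀.continuous
    obtain ⟨r, hr, hball⟩ := Metric.isOpen_iff.1 hopen y₀ hy₀pos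
    have hpos : 0 < ∫ y in ball y₀ r, Γ y₀ y τ * u₀ y := by
      rw [integral_pos_iff_support_of_nonneg_ae
        (Eventually.of_forall fun y => mul_nonneg (hΓpos y₀ y τ hτ).le (hu₀nn y))
        (hint_u₀ y₀ τ hτ).integrableOn]
      rw [Measure.restrict_apply' measurableSet_ball]
      refine lt_of_lt_of_le (Metric.measure_ball_pos volume y₀ hr) (measure_mono ?_)
      intro y hy
      exact ⟨ne_of_gt (mul_pos (hΓpos y₀ y τ hτ) (hball hy)), hy⟩
    have hle : (∫ y in ball y₀ r, Γ y₀ y τ * u₀ y) ≤ S τ u₀ y₀ := by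
      rw [hSτx y₀]
      exact setIntegral_le_integral (hint_u₀ y₀ τ hτ)
        (Eventually.of_forall fun y => mul_nonneg (hΓpos y₀ y τ hτ).le (hu₀nn y))
    calc (0:ℝ) < S τ u₀ y₀ := lt_of_lt_of_le hpos hle
      _ ≤ a := le_trans (le_abs_self _)
        (by simpa [Real.norm_eq_abs] using (S τ u₀).norm_coe_le_norm y₀)
  -- choice of M, δ, ε and the point x
  set M : ℝ := max ‖u τ‖ a with hMdef
  have hMa : a ≤ M := le_max_right _ _
  have hMpos : 0 < M := lt_of_lt_of_le ha hMa
  set δ : ℝ := ∫ σ in Ioi M, 1 / f σ with hδdef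
  have hδpos : 0 < δ := by
    rw [hδdef, integral_pos_iff_support_of_nonneg_ae ?_ (hfOsgood M hMpos)]
    · rw [Measure.restrict_apply' measurableSet_Ioi]
      have hsub : Ioi M ⊆ (Function.support fun σ => 1 / f σ) ∩ Ioi M := by
        intro σ hσ
        have hfσ : 0 < f σ := hfpos σ (lt_trans hMpos hσ)
        exact ⟨ne_of_gt (by positivity), hσ⟩
      refine lt_of_lt_of_le ?_ (measure_mono hsub)
      rw [Real.volume_Ioi]
      exact ENNReal.zero_lt_top
    · filter_upwards [ae_restrict_mem measurableSet_Ioi] with σ hσ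
      exact div_nonneg zero_le_one (hfpos σ (lt_trans hMpos hσ)).le
  have hfa2 : 0 < f (a / 2) := hfpos _ (half_pos ha)
  set ε : ℝ := min (a / 2) (δ * f (a / 2) / 2) with hεdef
  have hεpos : 0 < ε := lt_min (half_pos ha) (by positivity)
  have hεa2 : ε ≤ a / 2 := min_le_left _ _
  obtain ⟨x, hx⟩ : ∃ x, a - ε < S τ u₀ x := by
    by_contra hc
    push_neg at hc
    have hb : ‖S τ u₀‖ ≤ a - ε := by
      rw [BoundedContinuousFunction.norm_le (by linarith)]
      intro z
      rw [Real.norm_eq_abs, abs_of_nonneg (hSτnn z)]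
      exact hc z
    rw [← hadef] at hb
    linarith
  set a' : ℝ := S τ u₀ x with ha'def
  have ha'pos : 0 < a' := by
    have : a / 2 ≤ a - ε := by linarith
    linarith [half_pos ha]
  have ha'le : a' ≤ a := by
    rw [hadef, ha'def]
    exact le_trans (le_abs_self _) (by simpa [Real.norm_eq_abs] using (S τ u₀).norm_coe_le_norm x)
  -- the function w
  set w : ℝ → ℝ := fun σ => S (τ - σ) (u σ) x with hwdef
  have hCbb : ∀ (φ : CbN N) (y : EucN N), |φ y| ≤ ‖φ‖ := fun φ y => by
    simpa [Real.norm_eq_abs] using φ.norm_coe_le_norm y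
  have hCbint : ∀ (φ : CbN N) (z : EucN N) (t : ℝ), 0 < t →
      Integrable fun y => Γ z y t * φ y := fun φ z t ht =>
    NGAux.kernel_mul_integrable (hΓint z t ht)
      φ.continuous.measurable.aestronglyMeasurable (hCbb φ)
  have hSnormpt : ∀ (φ : CbN N) (t : ℝ), 0 ≤ t → ∀ z, |S t φ z| ≤ ‖φ‖ := by
    intro φ t ht z
    rcases eq_or_lt_of_le ht with h0 | hpos
    · rw [← h0, hS0]
      exact hCbb φ z
    · rw [hSΓ φ t hpos z]
      exact NGAux.kernel_mul_integral_le (hΓint z t hpos)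
        (fun y => (hΓpos z y t hpos).le) (hK1y z t hpos) (hCbint φ z t hpos) (hCbb φ)
  have hSdiff : ∀ (φ ψ : CbN N) (t : ℝ), 0 ≤ t → ∀ z, |S t φ z - S t ψ z| ≤ ‖φ - ψ‖ := by
    intro φ ψ t ht z
    rcases eq_or_lt_of_le ht with h0 | hpos
    · rw [← h0, hS0, hS0]
      simpa using hCbb (φ - ψ) z
    · rw [hSΓ φ t hpos z, hSΓ ψ t hpos z, ← integral_sub (hCbint φ z t hpos) (hCbint ψ z t hpos)]
      have hcong : (∫ y, Γ z y t * φ y - Γ z y t * ψ y) = ∫ y, Γ z y t * (φ - ψ) y := by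
        refine integral_congr_ae (Eventually.of_forall fun y => ?_)
        simp [mul_sub]
      rw [hcong]
      exact NGAux.kernel_mul_integral_le (hΓint z t hpos)
        (fun y => (hΓpos z y t hpos).le) (hK1y z t hpos) (hCbint (φ - ψ) z t hpos)
        (hCbb (φ - ψ))
  have hwc : ContinuousOn w (Icc 0 τ) := by
    intro σ₀ hσ₀
    have huc₀ : ContinuousWithinAt u (Icc 0 τ) σ₀ := (hucont.mono Icc_subset_Ici_self) σ₀ hσ₀
    have h2 : Tendsto (fun σ => S (τ - σ) (u σ₀) x) (𝓝[Icc 0 τ] σ₀) (𝓝 (S (τ - σ₀) (u σ₀) x)) := by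
      have hsub : ContinuousWithinAt (fun σ : ℝ => τ - σ) (Icc 0 τ) σ₀ :=
        (continuous_const.sub continuous_id).continuousWithinAt
      have hmaps : MapsTo (fun σ : ℝ => τ - σ) (Icc 0 τ) (Ici 0) := fun σ hσ =>
        mem_Ici.2 (sub_nonneg.2 hσ.2)
      have hcw : ContinuousWithinAt (fun σ => S (τ - σ) (u σ₀)) (Icc 0 τ) σ₀ :=
        ((hK4 (u σ₀)) (τ - σ₀) (mem_Ici.2 (sub_nonneg.2 hσ₀.2))).comp hsub hmaps
      exact ((continuous_eval_const x).continuousAt).tendsto.comp hcw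
    have h1 : Tendsto (fun σ => S (τ - σ) (u σ) x - S (τ - σ) (u σ₀) x)
        (𝓝[Icc 0 τ] σ₀) (𝓝 0) := by
      have hbnd : ∀ᶠ σ in 𝓝[Icc 0 τ] σ₀,
          ‖S (τ - σ) (u σ) x - S (τ - σ) (u σ₀) x‖ ≤ ‖u σ - u σ₀‖ := by
        filter_upwards [self_mem_nhdsWithin] with σ hσ
        simpa [Real.norm_eq_abs] using hSdiff (u σ) (u σ₀) (τ - σ) (sub_nonneg.2 hσ.2) x
      have htend : Tendsto (fun σ => ‖u σ - u σ₀‖) (𝓝[Icc 0 τ] σ₀) (𝓝 0) := by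
        have hsub : Tendsto (fun σ => u σ - u σ₀) (𝓝[Icc 0 τ] σ₀) (𝓝 (u σ₀ - u σ₀)) :=
          Tendsto.sub huc₀ tendsto_const_nhds
        rw [sub_self] at hsub
        simpa [Function.comp_def] using (continuous_norm.tendsto (0 : CbN N)).comp hsub
      exact squeeze_zero_norm' hbnd htend
    have hsum := h1.add h2
    rw [zero_add] at hsum
    refine (Tendsto.congr (fun σ => ?_) hsum :)
    simp [hwdef]
  have hwτ0 : w 0 = a' := by
    simp only [hwdef, sub_zero, hu0, ha'def]
  have hwnn : ∀ σ ∈ Icc (0:ℝ) τ, 0 ≤ w σ := by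
    intro σ hσ
    rcases eq_or_lt_of_le hσ.2 with h0 | hlt
    · rw [hwdef]
      simp only [h0, sub_self, hS0]
      exact hunn τ hτ.le x
    · rw [hwdef]
      simp only
      rw [hSΓ _ _ (by linarith) x]
      exact integral_nonneg fun y =>
        mul_nonneg (hΓpos x y _ (by linarith)).le (hunn σ hσ.1 y)
  have hwτM : w τ ≤ M := by
    have hwτ : w τ = u τ x := by simp [hwdef, hS0]
    rw [hwτ, hMdef]
    exact le_trans (le_trans (le_abs_self _)
      (by simpa [Real.norm_eq_abs] using (u τ).norm_coe_le_norm x)) (le_max_left _ _)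
  -- the key integral inequality
  have hqcont : ContinuousOn (fun σ => h σ * f (w σ)) (Icc 0 τ) :=
    ContinuousOn.mul (hhcont.mono Icc_subset_Ici_self)
      (hfc.comp hwc fun σ hσ => mem_Ici.2 (hwnn σ hσ))
  have key : ∀ t ∈ Icc (0:ℝ) τ, a' + ∫ σ in (0:ℝ)..t, h σ * f (w σ) ≤ w t := by
    intro t htm
    rcases eq_or_lt_of_le htm.1 with h0 | hlt
    · rw [← h0, intervalIntegral.integral_same, hwτ0]
      simp
    have htτ : t ≤ τ := htm.2
    set P : ℝ → EucN N → ℝ := fun σ ξ => ∫ y, Γ ξ y (t - σ) * Ft σ y with hPdef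
    have hPm : StronglyMeasurable fun p : EucN N × ℝ => P p.2 p.1 := by
      have hm : Measurable fun q : (EucN N × ℝ) × EucN N =>
          Γ q.1.1 q.2 (t - q.1.2) * Ft q.1.2 q.2 := by
        apply Measurable.mul
        · exact hΓmeas.comp ((measurable_fst.comp measurable_fst).prodMk
            (measurable_snd.prodMk (measurable_const.sub (measurable_snd.comp measurable_fst))))
        · exact hFtm.comp ((measurable_snd.comp measurable_fst).prodMk measurable_snd)
      exact hm.stronglyMeasurable.integral_prod_right'
    have hFtmσ : ∀ σ : ℝ, Measurable fun y => Ft σ y := fun σ =>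
      hFtm.comp (measurable_const.prodMk measurable_id)
    have hintΓFt : ∀ (z : EucN N) (s : ℝ), 0 < s → ∀ σ ∈ Icc (0:ℝ) τ,
        Integrable fun y => Γ z y s * Ft σ y := fun z s hs σ hσ =>
      NGAux.kernel_mul_integrable (hΓint z s hs) (hFtmσ σ).aestronglyMeasurable (hFtB σ hσ)
    have hPb : ∀ σ ∈ Ioo (0:ℝ) t, ∀ ξ, |P σ ξ| ≤ B := by
      intro σ hσ ξ
      have hts : 0 < t - σ := by linarith [hσ.2]
      have hσIcc : σ ∈ Icc (0:ℝ) τ := ⟨hσ.1.le, le_trans hσ.2.le htτ⟩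
      exact NGAux.kernel_mul_integral_le (hΓint ξ _ hts) (fun y => (hΓpos ξ y _ hts).le)
        (hK1y ξ _ hts) (hintΓFt ξ _ hts σ hσIcc) (hFtB σ hσIcc)
    have hueq' : ∀ ξ, u t ξ = (∫ y, Γ ξ y t * u₀ y) + ∫ σ in Ioo (0:ℝ) t, P σ ξ := by
      intro ξ
      rw [hueq t hlt ξ]
      congr 1
      have hcongr : ∀ σ ∈ uIcc (0:ℝ) t,
          (∫ y, Γ ξ y (t - σ) * (h σ * f (u σ y) + l σ * g (u σ y))) = P σ ξ := by
        intro σ hσ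
        rw [uIcc_of_le hlt.le] at hσ
        refine integral_congr_ae (Eventually.of_forall fun y => ?_)
        simp only
        rw [hFteq σ hσ.1 y]
      rw [intervalIntegral.integral_congr hcongr, intervalIntegral.integral_of_le hlt.le,
        integral_Ioc_eq_integral_Ioo]
    have hPlow : ∀ σ ∈ Ioo (0:ℝ) t, h σ * f (w σ) ≤ ∫ y, Γ x y (τ - σ) * Ft σ y := by
      intro σ hσ
      have hσIcc : σ ∈ Icc (0:ℝ) τ := ⟨hσ.1.le, le_trans hσ.2.le htτ⟩
      have hτσ : 0 < τ - σ := by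
        have := hσ.2
        linarith
      have hfu_meas : Measurable fun y => f (u σ y) := by
        have hrw : (fun y => f (u σ y)) = fun y => f₁ (v σ y) := by
          funext y
          simp [hf₁def, hvdef, max_eq_left hσ.1.le, max_eq_left (hunn σ hσ.1.le y)]
        rw [hrw]
        exact (hf₁c.comp (v σ).continuous).measurable
      have hint_fu : Integrable fun y => Γ x y (τ - σ) * f (u σ y) :=
        NGAux.kernel_mul_integrable (hΓint x _ hτσ) hfu_meas.aestronglyMeasurable
          (hfuB σ hσIcc)
      have hint_Ft : Integrable fun y => Γ x y (τ - σ) * Ft σ y := hintΓFt x _ hτσ σ hσIcc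
      have hJ : f (w σ) ≤ ∫ y, Γ x y (τ - σ) * f (u σ y) := by
        have := hfJensen (u σ) (hunn σ hσ.1.le) (τ - σ) hτσ x
        simpa [hwdef] using this
      calc h σ * f (w σ) ≤ h σ * ∫ y, Γ x y (τ - σ) * f (u σ y) :=
            mul_le_mul_of_nonneg_left hJ (hhnn σ hσ.1.le)
        _ = ∫ y, Γ x y (τ - σ) * (h σ * f (u σ y)) := by
            rw [← integral_const_mul]
            exact integral_congr_ae (Eventually.of_forall fun y => by ring)
        _ ≤ ∫ y, Γ x y (τ - σ) * Ft σ y := by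
            refine integral_mono ?_ hint_Ft fun y => ?_
            · have hre : (fun y => Γ x y (τ - σ) * (h σ * f (u σ y)))
                  = fun y => h σ * (Γ x y (τ - σ) * f (u σ y)) := by
                funext y
                ring
              rw [hre]
              exact hint_fu.const_mul (h σ)
            · rw [hFteq σ hσ.1.le y]
              have hlg : 0 ≤ l σ * g (u σ y) :=
                mul_nonneg (hlnn σ hσ.1.le) (hgnn _ (hunn σ hσ.1.le y))
              exact mul_le_mul_of_nonneg_left (le_add_of_nonneg_right hlg)
                (hΓpos x y _ hτσ).le
    rcases eq_or_lt_of_le htτ with hteq | htlt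
    · -- t = τ
      subst hteq
      have hwτval : w t = u t x := by simp [hwdef, hS0]
      rw [hwτval, hueq' x]
      have hfirst : (∫ y, Γ x y t * u₀ y) = a' := (hSτx x).symm.trans ha'def.symm
      rw [hfirst]
      have hconv : (∫ σ in (0:ℝ)..t, h σ * f (w σ)) = ∫ σ in Ioo (0:ℝ) t, h σ * f (w σ) := by
        rw [intervalIntegral.integral_of_le hlt.le, integral_Ioc_eq_integral_Ioo]
      rw [hconv]
      have hmono2 : (∫ σ in Ioo (0:ℝ) t, h σ * f (w σ)) ≤ ∫ σ in Ioo (0:ℝ) t, P σ x := by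
        refine setIntegral_mono_on
          ((hqcont.integrableOn_compact isCompact_Icc).mono_set Ioo_subset_Icc_self)
          ?_ measurableSet_Ioo fun σ hσ => ?_
        · refine Integrable.mono' (g := fun _ => B) (integrableOn_const measure_Ioo_lt_top.ne)
            (hPm.comp_measurable (measurable_const.prodMk measurable_id)).aestronglyMeasurable
            ?_
          filter_upwards [ae_restrict_mem measurableSet_Ioo] with σ hσ
          simpa [Real.norm_eq_abs] using hPb σ hσ x
        · simpa [hPdef] using hPlow σ hσ
      linarith
    · -- t < τ
      have hτt : 0 < τ - t := by linarith
      obtain ⟨T1, hT1def⟩ : ∃ T1 : EucN N → ℝ, T1 = fun ξ => ∫ y, Γ ξ y t * u₀ y := ⟨_, rfl⟩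
      obtain ⟨T2, hT2def⟩ : ∃ T2 : EucN N → ℝ, T2 = fun ξ => ∫ σ in Ioo (0:ℝ) t, P σ ξ :=
        ⟨_, rfl⟩
      have hwt : w t = ∫ ξ, Γ x ξ (τ - t) * (T1 ξ + T2 ξ) := by
        rw [hwdef]
        simp only
        rw [hSΓ (u t) (τ - t) hτt x]
        refine integral_congr_ae (Eventually.of_forall fun ξ => ?_)
        simp only [hT1def, hT2def]
        rw [hueq' ξ]
      have hT1m : Measurable T1 := by
        rw [hT1def]
        have hm : Measurable fun q : EucN N × EucN N => Γ q.1 q.2 t * u₀ q.2 :=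
          (hΓmeas.comp (measurable_fst.prodMk (measurable_snd.prodMk measurable_const))).mul
            (u₀.continuous.measurable.comp measurable_snd)
        exact hm.stronglyMeasurable.integral_prod_right'.measurable
      have hT1b : ∀ ξ, |T1 ξ| ≤ ‖u₀‖ := by
        intro ξ
        rw [hT1def]
        exact NGAux.kernel_mul_integral_le (hΓint ξ t hlt) (fun y => (hΓpos ξ y t hlt).le)
          (hK1y ξ t hlt) (hint_u₀ ξ t hlt) hu₀b
      have hint1 : Integrable fun ξ => Γ x ξ (τ - t) * T1 ξ :=
        NGAux.kernel_mul_integrable (hΓint x _ hτt) hT1m.aestronglyMeasurable hT1b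
      have hQint := KB.kernelB_integrable Γ hΓmeas x (ht := hlt) (hΓint x (τ - t) hτt)
        P hPm hPb
      have hT2m : StronglyMeasurable T2 := by
        rw [hT2def]
        exact hPm.integral_prod_right' (ν := volume.restrict (Ioo (0:ℝ) t))
      have hT2b : ∀ ξ, |T2 ξ| ≤ B * (volume (Ioo (0:ℝ) t)).toReal := by
        intro ξ
        rw [hT2def]
        simp only
        have := norm_setIntegral_le_of_norm_le_const (μ := volume) (s := Ioo (0:ℝ) t)
          (f := fun σ => P σ ξ)
          measure_Ioo_lt_top (fun σ hσ => by simpa [Real.norm_eq_abs] using hPb σ hσ ξ)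
        simpa [Real.norm_eq_abs, measureReal_def] using this
      have hint2 : Integrable fun ξ => Γ x ξ (τ - t) * T2 ξ :=
        NGAux.kernel_mul_integrable (hΓint x _ hτt) hT2m.measurable.aestronglyMeasurable hT2b
      have hsplit2 : w t = (∫ ξ, Γ x ξ (τ - t) * T1 ξ) + ∫ ξ, Γ x ξ (τ - t) * T2 ξ := by
        rw [hwt, ← integral_add hint1 hint2]
        exact integral_congr_ae (Eventually.of_forall fun ξ => by ring)
      have hp1 : (∫ ξ, Γ x ξ (τ - t) * T1 ξ) = a' := by
        have hka := KA.kernelA Γ hΓmeas hK1y hK2 hΓpos x hτt hlt (fun y => u₀ y)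
          u₀.continuous.measurable hu₀b
        simp only [hT1def]
        rw [hka, show τ - t + t = τ by ring]
        exact (hSτx x).symm.trans ha'def.symm
      have hswap : (∫ ξ, Γ x ξ (τ - t) * T2 ξ)
          = ∫ σ in Ioo (0:ℝ) t, ∫ ξ, Γ x ξ (τ - t) * P σ ξ := by
        have hre : ∀ ξ, Γ x ξ (τ - t) * T2 ξ = ∫ σ in Ioo (0:ℝ) t, Γ x ξ (τ - t) * P σ ξ := by
          intro ξ
          simp only [hT2def]
          exact (integral_const_mul _ _).symm
        rw [integral_congr_ae (Eventually.of_forall hre)]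
        exact integral_integral_swap hQint
      have hinner : ∀ σ ∈ Ioo (0:ℝ) t,
          (∫ ξ, Γ x ξ (τ - t) * P σ ξ) = ∫ y, Γ x y (τ - σ) * Ft σ y := by
        intro σ hσ
        have hts : 0 < t - σ := by linarith [hσ.2]
        have hka := KA.kernelA Γ hΓmeas hK1y hK2 hΓpos x hτt hts (fun y => Ft σ y)
          (hFtmσ σ) (hFtB σ ⟨hσ.1.le, le_trans hσ.2.le htτ⟩)
        rw [hPdef]
        simp only
        rw [hka, show τ - t + (t - σ) = τ - σ by ring]
      have hmono2 : (∫ σ in Ioo (0:ℝ) t, h σ * f (w σ))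
          ≤ ∫ σ in Ioo (0:ℝ) t, ∫ ξ, Γ x ξ (τ - t) * P σ ξ := by
        refine setIntegral_mono_on
          ((hqcont.integrableOn_compact isCompact_Icc).mono_set
            (subset_trans Ioo_subset_Icc_self (Icc_subset_Icc le_rfl htτ)))
          hQint.integral_prod_right measurableSet_Ioo fun σ hσ => ?_
        rw [hinner σ hσ]
        exact hPlow σ hσ
      have hconv : (∫ σ in (0:ℝ)..t, h σ * f (w σ)) = ∫ σ in Ioo (0:ℝ) t, h σ * f (w σ) := by
        rw [intervalIntegral.integral_of_le hlt.le, integral_Ioc_eq_integral_Ioo]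
      rw [hsplit2, hp1, hconv, hswap]
      linarith
  -- apply the Osgood lemma
  have hos := OSG.osgood f hfc hfmono hfpos hfnn hfOsgood h hhcont hhnn hτ ha'pos w hwc hwnn
    key (le_trans ha'le hMa) hwτM
  -- final chain
  have h1 : (∫ σ in Ioi a', 1 / f σ) ≤ ∫ σ in Ioi (a - ε), 1 / f σ :=
    OSG.G_antitone f hfnn hfOsgood (by linarith) hx.le
  have h2 : (∫ σ in Ioi (a - ε), 1 / f σ) ≤ (∫ σ in Ioi a, 1 / f σ) + ε * (1 / f (a / 2)) := by
    have haε : 0 < a - ε := by linarith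
    rw [OSG.G_split f hfOsgood haε (by linarith : a - ε ≤ a)]
    have hmono : (∫ σ in Ioc (a - ε) a, 1 / f σ) ≤ ∫ σ in Ioc (a - ε) a, 1 / f (a / 2) := by
      refine setIntegral_mono_on ((hfOsgood _ haε).mono_set Ioc_subset_Ioi_self)
        (integrableOn_const measure_Ioc_lt_top.ne) measurableSet_Ioc fun σ hσ => ?_
      refine one_div_le_one_div_of_le hfa2 ?_
      have ha2σ : a / 2 ≤ σ := by
        have := hσ.1
        linarith
      exact hfmono (mem_Ici.2 (le_of_lt (half_pos ha))) (mem_Ici.2 (by linarith [half_pos ha])) ha2σ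
    have hconst : (∫ _ in Ioc (a - ε) a, 1 / f (a / 2)) = ε * (1 / f (a / 2)) := by
      rw [setIntegral_const, Real.volume_real_Ioc, smul_eq_mul,
        show a - (a - ε) = ε by ring, max_eq_left hεpos.le]
    linarith
  have h3 : ε * (1 / f (a / 2)) ≤ δ / 2 := by
    have hεle : ε ≤ δ * f (a / 2) / 2 := min_le_right _ _
    calc ε * (1 / f (a / 2)) ≤ δ * f (a / 2) / 2 * (1 / f (a / 2)) :=
          mul_le_mul_of_nonneg_right hεle (by positivity)
      _ = δ / 2 := by field_simp
  have hcond' : (∫ σ in Ioi a, 1 / f σ) ≤ ∫ σ in (0:ℝ)..τ, h σ := hcond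
  linarith
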